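/- In a cell complex, a face A with boundary (X_1 X_2 b Y b^{-1}) is equivalent to a face A' with boundary (X_2 X_1 c Y c^{-1}) for a fresh edge c; i.e., the two 'boundary components' X_1X_2 and Y may be reconnected after an arbitrary cyclic permutation of X_1X_2. -/

import Mathlib

/-- An oriented edge: an edge name together with an orientation. -/
abbrev OEdge := ℕ × Bool

/-- A boundary word of a face (read cyclically). -/
abbrev CWord := List OEdge

/-- A cell complex, presented by a choice of boundary word for each face. -/
abbrev PreCell := Multiset CWord

/-- The inverse of an oriented edge. -/
def oinv (x : OEdge) : OEdge := (x.1, !x.2)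

/-- The inverse of a boundary word. -/
def winv (w : CWord) : CWord := (w.map oinv).reverse

/-- The edge `e` occurs (in some orientation) in the word `w`. -/
def occursW (e : ℕ) (w : CWord) : Prop := ∃ b, (e, b) ∈ w

/-- The edge `e` occurs in the complex `C`. -/
def occursC (e : ℕ) (C : PreCell) : Prop := ∃ w ∈ C, occursW e w

/-- The total number of occurrences of the edge `e` (in either orientation) among the
boundary words of `C`. -/
def occCount (e : ℕ) (C : PreCell) : ℕ :=
  (C.map fun w => w.countP fun p => p.1 == e).sum

/-- `(F, E, B)` is a cell complex: every (oriented) edge appears at most twice in total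
among the chosen boundary words. -/
def IsCellComplex (C : PreCell) : Prop := ∀ e : ℕ, occCount e C ≤ 2

/-- Substitution used in an elementary subdivision: replace the edge `a` by the two-letter
word `bc` (and `a⁻¹` by `c⁻¹b⁻¹`). -/
def substEdge (a b c : ℕ) (p : OEdge) : CWord :=
  if p.1 = a then (if p.2 then [(b, true), (c, true)] else [(c, false), (b, false)])
  else [p]

/-- The elementary moves on cell complexes: cyclic rotation of a boundary word, replacing a
face by its inverse, splitting a face `(XY)` into `(Xa) + (a⁻¹Y)` along a fresh edge `a`,
and subdividing an edge `a` into a word `bc` of fresh edges. -/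
inductive ElemMove : PreCell → PreCell → Prop
  | rot (w₁ w₂ : CWord) (C : PreCell) :
      ElemMove ((w₁ ++ w₂) ::ₘ C) ((w₂ ++ w₁) ::ₘ C)
  | invert (w : CWord) (C : PreCell) :
      ElemMove (w ::ₘ C) (winv w ::ₘ C)
  | split (Xw Yw : CWord) (a : ℕ) (C : PreCell)
      (haX : ¬ occursW a Xw) (haY : ¬ occursW a Yw) (haC : ¬ occursC a C) :
      ElemMove ((Xw ++ Yw) ::ₘ C)
        ((Xw ++ [(a, true)]) ::ₘ ((a, false) :: Yw) ::ₘ C)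
  | subdivide (a b c : ℕ) (C : PreCell)
      (hb : ¬ occursC b C) (hc : ¬ occursC c C) (hbc : b ≠ c) :
      ElemMove C (C.map fun w => w.flatMap (substEdge a b c))

/-- Equivalence of cell complexes: the least equivalence relation generated by the
elementary moves (elementary subdivisions and their inverses). -/
def CellEquiv : PreCell → PreCell → Prop := Relation.EqvGen ElemMove

theorem occursW_append {e : ℕ} {w₁ w₂ : CWord} :
    occursW e (w₁ ++ w₂) ↔ occursW e w₁ ∨ occursW e w₂ := by
  simp [occursW, List.mem_append, exists_or]

theorem occursW_cons {e f : ℕ} {x : Bool} {w : CWord} :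
    occursW e ((f, x) :: w) ↔ e = f ∨ occursW e w := by
  simp [occursW, List.mem_cons, exists_or, Prod.ext_iff]

theorem occursW_nil {e : ℕ} : ¬ occursW e ([] : CWord) := by simp [occursW]

theorem occursW_singleton {e f : ℕ} {x : Bool} : occursW e [(f, x)] ↔ e = f := by
  simp [occursW, Prod.ext_iff]

theorem cellEquiv_rot (w₁ w₂ : CWord) (C : PreCell) :
    CellEquiv ((w₁ ++ w₂) ::ₘ C) ((w₂ ++ w₁) ::ₘ C) :=
  Relation.EqvGen.rel _ _ (ElemMove.rot w₁ w₂ C)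

theorem reconnect_aux (X₁ X₂ Yw : CWord) (b c : ℕ) (C : PreCell)
    (hbc : b ≠ c)
    (hbX₁ : ¬ occursW b X₁) (hbX₂ : ¬ occursW b X₂) (hbY : ¬ occursW b Yw)
    (hbC : ¬ occursC b C)
    (hcX₁ : ¬ occursW c X₁) (hcX₂ : ¬ occursW c X₂) (hcY : ¬ occursW c Yw)
    (hcC : ¬ occursC c C) :
    CellEquiv ((X₁ ++ X₂ ++ [(b, true)] ++ Yw ++ [(b, false)]) ::ₘ C)
      ((X₂ ++ X₁ ++ [(c, true)] ++ Yw ++ [(c, false)]) ::ₘ C) := by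
  -- Step 1: rotate to (b⁻¹ X₁ X₂ b Y)
  have s1 : CellEquiv ((X₁ ++ X₂ ++ [(b, true)] ++ Yw ++ [(b, false)]) ::ₘ C)
      ((((b, false) :: X₁) ++ (X₂ ++ [(b, true)] ++ Yw)) ::ₘ C) := by
    have h := cellEquiv_rot (X₁ ++ X₂ ++ [(b, true)] ++ Yw) [(b, false)] C
    simpa using h
  -- Step 2: split along c : (b⁻¹ X₁ c) + (c⁻¹ X₂ b Y)
  have s2 : CellEquiv ((((b, false) :: X₁) ++ (X₂ ++ [(b, true)] ++ Yw)) ::ₘ C)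
      ((((b, false) :: X₁) ++ [(c, true)]) ::ₘ
        ((c, false) :: (X₂ ++ [(b, true)] ++ Yw)) ::ₘ C) := by
    refine Relation.EqvGen.rel _ _ (ElemMove.split _ _ c C ?_ ?_ hcC)
    · simp [occursW_cons, occursW_append, occursW_nil, hcX₁, Ne.symm hbc]
    · simp [occursW_cons, occursW_append, occursW_nil, hcX₂, hcY, Ne.symm hbc]
  -- Step 3: rotate second face to (Y c⁻¹ X₂ b)
  have s3 : CellEquiv ((((b, false) :: X₁) ++ [(c, true)]) ::ₘ
        ((c, false) :: (X₂ ++ [(b, true)] ++ Yw)) ::ₘ C)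
      (((Yw ++ ((c, false) :: X₂) ++ [(b, true)])) ::ₘ
        (((b, false) :: X₁) ++ [(c, true)]) ::ₘ C) := by
    rw [Multiset.cons_swap]
    have h := cellEquiv_rot (((c, false) :: X₂) ++ [(b, true)]) Yw
      ((((b, false) :: X₁) ++ [(c, true)]) ::ₘ C)
    simpa using h
  -- Step 4: merge along b (reverse split)
  have s4 : CellEquiv (((Yw ++ ((c, false) :: X₂) ++ [(b, true)])) ::ₘ
        (((b, false) :: X₁) ++ [(c, true)]) ::ₘ C)
      (((Yw ++ ((c, false) :: X₂)) ++ (X₁ ++ [(c, true)])) ::ₘ C) := by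
    refine Relation.EqvGen.symm _ _ (Relation.EqvGen.rel _ _ ?_)
    have h := ElemMove.split (Yw ++ ((c, false) :: X₂)) (X₁ ++ [(c, true)]) b C
      (by simp [occursW_cons, occursW_append, occursW_nil, hbY, hbX₂, hbc])
      (by simp [occursW_cons, occursW_append, occursW_nil, hbX₁, hbc])
      hbC
    simpa using h
  -- Step 5: rotate to (X₂ X₁ c Y c⁻¹)
  have s5 : CellEquiv (((Yw ++ ((c, false) :: X₂)) ++ (X₁ ++ [(c, true)])) ::ₘ C)
      ((X₂ ++ X₁ ++ [(c, true)] ++ Yw ++ [(c, false)]) ::ₘ C) := by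
    have h := cellEquiv_rot (Yw ++ [(c, false)]) (X₂ ++ X₁ ++ [(c, true)]) C
    simpa using h
  exact ((((s1.trans _ _ _ s2).trans _ _ _ s3).trans _ _ _ s4).trans _ _ _ s5)

/-- An upper bound for the edges occurring in a word. -/
def wsup (w : CWord) : ℕ := ((w.map Prod.fst : List ℕ) : Multiset ℕ).sup

theorem le_wsup {e : ℕ} {w : CWord} (h : occursW e w) : e ≤ wsup w := by
  obtain ⟨x, hx⟩ := h
  exact Multiset.le_sup (by simp only [Multiset.mem_coe, List.mem_map]; exact ⟨(e, x), hx, rfl⟩)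

/-- An upper bound for the edges occurring in a complex. -/
def csup (C : PreCell) : ℕ := (C.map wsup).sup

theorem le_csup {e : ℕ} {C : PreCell} (h : occursC e C) : e ≤ csup C := by
  obtain ⟨w, hw, hww⟩ := h
  exact le_trans (le_wsup hww) (Multiset.le_sup (Multiset.mem_map_of_mem _ hw))

/-- In a cell complex, a face with boundary `(X₁ X₂ b Y b⁻¹)` is
equivalent to a face with boundary `(X₂ X₁ c Y c⁻¹)` for a fresh edge `c`: the two
boundary components `X₁X₂` and `Y` may be reconnected after an arbitrary cyclic
permutation of `X₁X₂`. -/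
theorem reconnect_boundary_components (X₁ X₂ Yw : CWord) (b c : ℕ) (C : PreCell)
    (hval : IsCellComplex ((X₁ ++ X₂ ++ [(b, true)] ++ Yw ++ [(b, false)]) ::ₘ C))
    (hbX₁ : ¬ occursW b X₁) (hbX₂ : ¬ occursW b X₂) (hbY : ¬ occursW b Yw)
    (hbC : ¬ occursC b C)
    (hcX₁ : ¬ occursW c X₁) (hcX₂ : ¬ occursW c X₂) (hcY : ¬ occursW c Yw)
    (hcC : ¬ occursC c C) :
    CellEquiv ((X₁ ++ X₂ ++ [(b, true)] ++ Yw ++ [(b, false)]) ::ₘ C)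
      ((X₂ ++ X₁ ++ [(c, true)] ++ Yw ++ [(c, false)]) ::ₘ C) := by
  rcases eq_or_ne b c with rfl | hbc
  · -- degenerate case: use a fresh intermediate edge d
    set F : CWord := X₁ ++ X₂ ++ [(b, true)] ++ Yw ++ [(b, false)] with hF
    set d : ℕ := csup (F ::ₘ C) + 1 with hd
    have hdfresh : ∀ e : ℕ, occursC e (F ::ₘ C) → e ≠ d := by
      intro e he
      have := le_csup he
      omega
    have hdF : ¬ occursW d F := fun h =>
      hdfresh d ⟨F, Multiset.mem_cons_self _ _, h⟩ rfl
    have hdX₁ : ¬ occursW d X₁ := fun h => hdF (by simp [hF, occursW_append, occursW_cons, occursW_nil, h])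
    have hdX₂ : ¬ occursW d X₂ := fun h => hdF (by simp [hF, occursW_append, occursW_cons, occursW_nil, h])
    have hdY : ¬ occursW d Yw := fun h => hdF (by simp [hF, occursW_append, occursW_cons, occursW_nil, h])
    have hdC : ¬ occursC d C := by
      rintro ⟨w, hw, hww⟩
      exact hdfresh d ⟨w, Multiset.mem_cons_of_mem hw, hww⟩ rfl
    have hbd : b ≠ d := by
      intro h
      exact hdF (by simp [hF, occursW_append, occursW_cons, occursW_nil, ← h])
    have step1 := reconnect_aux X₁ X₂ Yw b d C hbd hbX₁ hbX₂ hbY hbC hdX₁ hdX₂ hdY hdC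
    have step2 := reconnect_aux (X₂ ++ X₁) [] Yw d b C (Ne.symm hbd)
      (by simp [occursW_append, hdX₁, hdX₂]) (by simp [occursW_nil]) hdY hdC
      (by simp [occursW_append, hbX₁, hbX₂]) (by simp [occursW_nil]) hbY hbC
    simp only [List.append_nil, List.nil_append] at step2
    exact step1.trans _ _ _ (by simpa [CellEquiv, List.append_assoc] using step2)
  · exact reconnect_aux X₁ X₂ Yw b c C hbc hbX₁ hbX₂ hbY hbC hcX₁ hcX₂ hcY hcC
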